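/- Let n > 2 and θ ≥ 1/2. Then there exist t₀ > 0 and a constant C > 0 depending only on n and θ such that for all t ≥ t₀: C t^{−(n−2)/(2θ)} ≤ ∫_{ℝⁿ} e^{−t log(1+|ξ|^{2θ})} · sin²(|ξ|t)/|ξ|² dξ ≤ C^{−1} t^{−(n−2)/(2θ)}. -/

import Mathlib

open MeasureTheory Real Set Metric

noncomputable def radF (n : ℕ) (θ t r : ℝ) : ℝ :=
  r ^ (n-1) * (Real.exp (-t * Real.log (1 + r ^ (2*θ))) * Real.sin (r*t)^2 / r^2)

noncomputable def upF (n : ℕ) (θ t r : ℝ) : ℝ :=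
  r ^ (n-3) * Real.exp (-t * Real.log (1 + r ^ (2*θ)))

lemma measurable_core (θ t : ℝ) :
    Measurable (fun r : ℝ => Real.exp (-t * Real.log (1 + r ^ (2*θ)))) := by
  apply Real.measurable_exp.comp
  apply Measurable.const_mul
  exact Real.measurable_log.comp (measurable_const.add ((by measurability : Measurable fun x : ℝ => x ^ (2*θ))))

lemma measurable_radF (n : ℕ) (θ t : ℝ) : Measurable (radF n θ t) := by
  unfold radF
  exact (measurable_id.pow_const _).mul
    (((measurable_core θ t).mul
      ((Real.measurable_sin.comp (measurable_id.mul_const t)).pow_const 2)).div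
      (measurable_id.pow_const 2))

lemma measurable_upF (n : ℕ) (θ t : ℝ) : Measurable (upF n θ t) := by
  unfold upF
  exact (measurable_id.pow_const _).mul (measurable_core θ t)

lemma radF_nonneg (n : ℕ) (θ t r : ℝ) (hr : 0 ≤ r) : 0 ≤ radF n θ t r := by
  unfold radF; positivity

lemma upF_nonneg (n : ℕ) (θ t r : ℝ) (hr : 0 ≤ r) : 0 ≤ upF n θ t r := by
  unfold upF; positivity

lemma pow_split (n : ℕ) (hn : 3 ≤ n) (r : ℝ) : r ^ (n-1) = r ^ (n-3) * r^2 := by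
  rw [← pow_add]; congr 1; omega

lemma radF_eq (n : ℕ) (hn : 3 ≤ n) (θ t r : ℝ) (hr : 0 < r) :
    radF n θ t r
      = r ^ (n-3) * (Real.exp (-t * Real.log (1 + r ^ (2*θ))) * Real.sin (r*t)^2) := by
  unfold radF; rw [pow_split n hn]
  field_simp

lemma radF_le_upF (n : ℕ) (hn : 3 ≤ n) (θ t r : ℝ) (hr : 0 < r) :
    radF n θ t r ≤ upF n θ t r := by
  rw [radF_eq n hn θ t r hr]
  unfold upF
  have h1 : Real.sin (r*t)^2 ≤ 1 := sin_sq_le_one _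
  have h2 : 0 ≤ Real.exp (-t * Real.log (1 + r ^ (2*θ))) := (Real.exp_pos _).le
  apply mul_le_mul_of_nonneg_left _ (pow_nonneg hr.le (n-3))
  exact mul_le_of_le_one_right h2 h1

-- log 2 * x ≤ log (1+x) on [0,1]
lemma log_two_mul_le {x : ℝ} (h0 : 0 ≤ x) (h1 : x ≤ 1) :
    Real.log 2 * x ≤ Real.log (1 + x) := by
  rw [Real.le_log_iff_exp_le (by linarith)]
  have h := convexOn_exp.2 (Set.mem_univ (0:ℝ)) (Set.mem_univ (Real.log 2))
    (by linarith : (0:ℝ) ≤ 1 - x) h0 (by ring)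
  simp only [smul_eq_mul, mul_zero, zero_add, Real.exp_zero, mul_one,
    Real.exp_log two_pos] at h
  calc Real.exp (Real.log 2 * x) = Real.exp (x * Real.log 2) := by ring_nf
    _ ≤ (1-x) + x*2 := h
    _ = 1 + x := by ring

section Radial

variable {n : ℕ} {θ : ℝ}

lemma upF_integrableOn (hn : 3 ≤ n) (hθ : 1/2 ≤ θ) {t : ℝ} (ht : (n:ℝ) ≤ t) :
    IntegrableOn (upF n θ t) (Ioi (0:ℝ)) := by
  have hα : 1 ≤ 2*θ := by linarith
  have hn3 : (3:ℝ) ≤ (n:ℝ) := by exact_mod_cast hn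
  have ht0 : 0 < t := by linarith
  have h1 : IntegrableOn (upF n θ t) (Ioc (0:ℝ) 1) := by
    apply Measure.integrableOn_of_bounded (M := 1) measure_Ioc_lt_top.ne
      (measurable_upF n θ t).aestronglyMeasurable
    rw [ae_restrict_iff' measurableSet_Ioc]
    filter_upwards with r hr
    have hr0 : 0 < r := hr.1
    have hb1 : r ^ (n-3) ≤ 1 := pow_le_one₀ hr0.le hr.2
    have hb2 : Real.exp (-t * Real.log (1 + r ^ (2*θ))) ≤ 1 := by
      rw [Real.exp_le_one_iff]
      have hlog : 0 ≤ Real.log (1 + r ^ (2*θ)) :=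
        Real.log_nonneg (by nlinarith [Real.rpow_nonneg hr0.le (2*θ)])
      nlinarith
    rw [Real.norm_eq_abs, abs_of_nonneg (upF_nonneg n θ t r hr0.le)]
    unfold upF
    nlinarith [pow_nonneg hr0.le (n-3), (Real.exp_pos (-t * Real.log (1 + r ^ (2*θ)))).le]
  have hδ : (n:ℝ) - 3 - n*(2*θ) < -1 := by nlinarith
  have h2 : IntegrableOn (upF n θ t) (Ioi (1:ℝ)) := by
    apply Integrable.mono' (integrableOn_Ioi_rpow_of_lt hδ one_pos)
      (measurable_upF n θ t).aestronglyMeasurable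
    rw [ae_restrict_iff' measurableSet_Ioi]
    filter_upwards with r hr
    have hr1 : 1 < r := hr
    have hr0 : 0 < r := by linarith
    rw [Real.norm_eq_abs, abs_of_nonneg (upF_nonneg n θ t r hr0.le)]
    unfold upF
    have hL : (2*θ) * Real.log r ≤ Real.log (1 + r ^ (2*θ)) := by
      rw [← Real.log_rpow hr0]
      apply Real.log_le_log (Real.rpow_pos_of_pos hr0 _)
      linarith
    have hlogr : 0 ≤ Real.log r := Real.log_nonneg hr1.le
    have he : Real.exp (-t * Real.log (1 + r ^ (2*θ))) ≤ r ^ (-((n:ℝ)*(2*θ))) := by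
      rw [Real.rpow_def_of_pos hr0 (-((n:ℝ)*(2*θ)))]
      apply Real.exp_le_exp.2
      have : (n:ℝ)*(2*θ) * Real.log r ≤ t * Real.log (1 + r ^ (2*θ)) := by
        calc (n:ℝ)*(2*θ) * Real.log r ≤ t * ((2*θ) * Real.log r) := by
              nlinarith [mul_nonneg (sub_nonneg.2 ht) (mul_nonneg (by linarith : (0:ℝ) ≤ 2*θ) hlogr)]
          _ ≤ t * Real.log (1 + r ^ (2*θ)) := by nlinarith
      nlinarith
    calc r ^ (n-3) * Real.exp (-t * Real.log (1 + r ^ (2*θ)))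
        ≤ r ^ (n-3) * r ^ (-((n:ℝ)*(2*θ))) := by
          apply mul_le_mul_of_nonneg_left he (pow_nonneg hr0.le _)
      _ = r ^ ((n:ℝ) - 3 - n*(2*θ)) := by
          rw [← Real.rpow_natCast r (n-3), ← Real.rpow_add hr0]
          congr 1
          have : ((n-3:ℕ):ℝ) = (n:ℝ) - 3 := by
            push_cast [Nat.cast_sub hn]; ring
          rw [this]; ring
  have := h1.union h2
  rwa [Set.Ioc_union_Ioi_eq_Ioi (by norm_num : (0:ℝ) ≤ 1)] at this

lemma radF_integrableOn (hn : 3 ≤ n) (hθ : 1/2 ≤ θ) {t : ℝ} (ht : (n:ℝ) ≤ t) :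
    IntegrableOn (radF n θ t) (Ioi (0:ℝ)) := by
  apply Integrable.mono' (upF_integrableOn hn hθ ht)
    (measurable_radF n θ t).aestronglyMeasurable
  rw [ae_restrict_iff' measurableSet_Ioi]
  filter_upwards with r hr
  rw [Real.norm_eq_abs, abs_of_nonneg (radF_nonneg n θ t r (le_of_lt hr))]
  exact radF_le_upF n hn θ t r hr

end Radial

section Upper

variable {n : ℕ} {θ : ℝ}

lemma exp_neg_le (hβ : 0 < (((0:ℝ)+1):ℝ)) : True := trivial

lemma exp_neg_mul_log_two_le {β t : ℝ} (hβ : 0 < β) (ht1 : 1 ≤ t) :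
    Real.exp (-(t * Real.log 2)) ≤ ((⌈β⌉₊:ℝ)/Real.log 2)^(⌈β⌉₊) * t ^ (-β) := by
  set m : ℕ := ⌈β⌉₊ with hm
  have hm0 : 0 < m := Nat.ceil_pos.mpr hβ
  have ht0 : 0 < t := by linarith
  have hlog2 : 0 < Real.log 2 := Real.log_pos one_lt_two
  set x : ℝ := t * Real.log 2 with hx
  have hx0 : 0 < x := mul_pos ht0 hlog2
  have h1 : (x/m)^m ≤ Real.exp x := by
    have e1 : x/m ≤ Real.exp (x/m) := by linarith [Real.add_one_le_exp (x/m)]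
    have e2 := pow_le_pow_left₀ (by positivity) e1 m
    rwa [← Real.exp_nat_mul, mul_div_cancel₀ x (by exact_mod_cast hm0.ne' : (m:ℝ) ≠ 0)] at e2
  have h2 : Real.exp (-x) ≤ ((x/m)^m)⁻¹ := by
    rw [Real.exp_neg]
    exact inv_anti₀ (pow_pos (by positivity) m) h1
  have h3 : ((x/m)^m)⁻¹ = ((m:ℝ)/Real.log 2)^m * (t⁻¹)^m := by
    rw [← inv_pow, ← mul_pow]
    congr 1
    rw [hx, inv_div, div_mul_eq_div_div_swap, div_eq_mul_inv]
  have h4 : (t⁻¹ : ℝ)^m = t ^ (-(m:ℝ)) := by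
    rw [inv_pow, ← Real.rpow_natCast t m, ← Real.rpow_neg ht0.le]
  have h5 : t ^ (-(m:ℝ)) ≤ t ^ (-β) :=
    Real.rpow_le_rpow_of_exponent_le ht1 (neg_le_neg (Nat.le_ceil β))
  calc Real.exp (-x) ≤ ((x/m)^m)⁻¹ := h2
    _ = ((m:ℝ)/Real.log 2)^m * (t⁻¹)^m := h3
    _ ≤ ((m:ℝ)/Real.log 2)^m * t ^ (-β) := by
        rw [h4]
        exact mul_le_mul_of_nonneg_left h5 (by positivity)

lemma upF_integral_le (hn : 3 ≤ n) (hθ : 1/2 ≤ θ) :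
    ∃ c > (0:ℝ), ∀ t, (n:ℝ) ≤ t →
      ∫ r in Ioi (0:ℝ), upF n θ t r ≤ c * t ^ (-(((n:ℝ)-2)/(2*θ))) := by
  have hα : 1 ≤ 2*θ := by linarith
  have hα0 : (0:ℝ) < 2*θ := by linarith
  have hn3 : (3:ℝ) ≤ (n:ℝ) := by exact_mod_cast hn
  set β : ℝ := ((n:ℝ)-2)/(2*θ) with hβdef
  have hβ : 0 < β := by
    apply div_pos (by linarith) hα0
  set m : ℕ := ⌈β⌉₊ with hmdef
  have hlog2 : 0 < Real.log 2 := Real.log_pos one_lt_two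
  set δ : ℝ := (n:ℝ) - 3 - n*(2*θ) with hδdef
  have hδ : δ < -1 := by nlinarith
  have hδ1 : δ + 1 < 0 := by linarith
  have hΓ : 0 < Real.Gamma β := Real.Gamma_pos_of_pos hβ
  refine ⟨(Real.log 2)^(-β) * (1/(2*θ)) * Real.Gamma β
    + Real.exp ((n:ℝ)*Real.log 2) * ((m:ℝ)/Real.log 2)^m * (-1/(δ+1)), ?_, ?_⟩
  · have h1 : 0 < (Real.log 2)^(-β) * (1/(2*θ)) * Real.Gamma β := by positivity
    have hmm : 0 < m := Nat.ceil_pos.mpr hβ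
    have h2 : 0 < Real.exp ((n:ℝ)*Real.log 2) * ((m:ℝ)/Real.log 2)^m * (-1/(δ+1)) := by
      exact mul_pos (mul_pos (Real.exp_pos _) (by positivity))
        (div_pos_iff.mpr (Or.inr ⟨by norm_num, hδ1⟩))
    linarith
  intro t ht
  have ht0 : 0 < t := by linarith
  have ht1 : 1 ≤ t := by linarith
  have hb : 0 < Real.log 2 * t := mul_pos hlog2 ht0
  have hcast : ((n-3:ℕ):ℝ) = (n:ℝ) - 3 := by push_cast [Nat.cast_sub hn]; ring
  have hupInt := upF_integrableOn hn hθ ht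
  -- piece 1
  set H1 : ℝ → ℝ := fun r => r ^ ((n:ℝ)-3) * Real.exp (-(Real.log 2 * t) * r ^ (2*θ)) with hH1
  have hH1int : IntegrableOn H1 (Ioi (0:ℝ)) :=
    integrableOn_rpow_mul_exp_neg_mul_rpow (by linarith : (-1:ℝ) < (n:ℝ)-3) hα0 hb
  have piece1 : ∫ r in Ioc (0:ℝ) 1, upF n θ t r
      ≤ (Real.log 2)^(-β) * (1/(2*θ)) * Real.Gamma β * t ^ (-β) := by
    have step1 : ∫ r in Ioc (0:ℝ) 1, upF n θ t r ≤ ∫ r in Ioc (0:ℝ) 1, H1 r := by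
      apply setIntegral_mono_on (hupInt.mono_set Ioc_subset_Ioi_self)
        (hH1int.mono_set Ioc_subset_Ioi_self) measurableSet_Ioc
      intro r hr
      have hr0 : 0 < r := hr.1
      have hx0 : 0 ≤ r ^ (2*θ) := Real.rpow_nonneg hr0.le _
      have hx1 : r ^ (2*θ) ≤ 1 := Real.rpow_le_one hr0.le hr.2 hα0.le
      have hlb := log_two_mul_le hx0 hx1
      unfold upF
      rw [hH1, ← Real.rpow_natCast r (n-3), hcast]
      apply mul_le_mul_of_nonneg_left _ (Real.rpow_nonneg hr0.le _)
      apply Real.exp_le_exp.2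
      nlinarith [mul_le_mul_of_nonneg_left hlb ht0.le]
    have step2 : ∫ r in Ioc (0:ℝ) 1, H1 r ≤ ∫ r in Ioi (0:ℝ), H1 r := by
      apply setIntegral_mono_set hH1int
      · filter_upwards [ae_restrict_mem measurableSet_Ioi] with r hr
        have h0r : (0:ℝ) < r := hr
        have : (0:ℝ) ≤ H1 r := by rw [hH1]; positivity
        exact this
      · exact (Ioc_subset_Ioi_self : Ioc (0:ℝ) 1 ⊆ Ioi 0).eventuallyLE
    have step3 : ∫ r in Ioi (0:ℝ), H1 r
        = (Real.log 2)^(-β) * (1/(2*θ)) * Real.Gamma β * t ^ (-β) := by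
      rw [hH1]
      rw [integral_rpow_mul_exp_neg_mul_rpow hα0 (by linarith : (-1:ℝ) < (n:ℝ)-3) hb]
      have e1 : ((n:ℝ)-3+1) = (n:ℝ)-2 := by ring
      rw [e1]
      have e2 : -((n:ℝ)-2)/(2*θ) = -β := by rw [hβdef]; ring
      rw [e2]
      rw [Real.mul_rpow hlog2.le ht0.le]
      ring
    calc ∫ r in Ioc (0:ℝ) 1, upF n θ t r ≤ ∫ r in Ioc (0:ℝ) 1, H1 r := step1
      _ ≤ ∫ r in Ioi (0:ℝ), H1 r := step2
      _ = _ := step3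
  -- piece 2
  have piece2 : ∫ r in Ioi (1:ℝ), upF n θ t r
      ≤ Real.exp ((n:ℝ)*Real.log 2) * ((m:ℝ)/Real.log 2)^m * (-1/(δ+1)) * t ^ (-β) := by
    have step1 : ∫ r in Ioi (1:ℝ), upF n θ t r
        ≤ ∫ r in Ioi (1:ℝ), Real.exp (-(t-n)*Real.log 2) * r ^ δ := by
      apply setIntegral_mono_on (hupInt.mono_set (Ioi_subset_Ioi (by norm_num)))
        ((integrableOn_Ioi_rpow_of_lt hδ one_pos).const_mul _) measurableSet_Ioi
      intro r hr
      have hr1 : 1 < r := hr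
      have hr0 : 0 < r := by linarith
      have hx1 : 1 ≤ r ^ (2*θ) := Real.one_le_rpow hr1.le hα0.le
      set L : ℝ := Real.log (1 + r ^ (2*θ)) with hL
      have hlogr : 0 ≤ Real.log r := Real.log_nonneg hr1.le
      have hL2 : Real.log 2 ≤ L := Real.log_le_log two_pos (by linarith)
      have hLr : (2*θ) * Real.log r ≤ L := by
        rw [hL, ← Real.log_rpow hr0]
        exact Real.log_le_log (Real.rpow_pos_of_pos hr0 _) (by linarith)
      have hsplit : Real.exp (-t*L) = Real.exp (-(t-n)*L) * Real.exp (-(n:ℝ)*L) := by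
        rw [← Real.exp_add]; ring_nf
      have b1 : Real.exp (-(t-n)*L) ≤ Real.exp (-(t-n)*Real.log 2) := by
        apply Real.exp_le_exp.2
        nlinarith [sub_nonneg.2 ht]
      have b2 : Real.exp (-(n:ℝ)*L) ≤ r ^ (-((n:ℝ)*(2*θ))) := by
        rw [Real.rpow_def_of_pos hr0 (-((n:ℝ)*(2*θ)))]
        apply Real.exp_le_exp.2
        nlinarith [mul_le_mul_of_nonneg_left hLr (Nat.cast_nonneg n : (0:ℝ) ≤ n)]
      have hpow : (r:ℝ) ^ (n-3) * r ^ (-((n:ℝ)*(2*θ))) = r ^ δ := by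
        rw [← Real.rpow_natCast r (n-3), ← Real.rpow_add hr0, hcast, hδdef]
        ring_nf
      unfold upF
      calc r ^ (n-3) * Real.exp (-t*L)
          ≤ r ^ (n-3) * (Real.exp (-(t-n)*Real.log 2) * Real.exp (-(n:ℝ)*L)) := by
            rw [hsplit]
            exact mul_le_mul_of_nonneg_left
              (mul_le_mul_of_nonneg_right b1 (Real.exp_pos _).le) (pow_nonneg hr0.le _)
        _ ≤ r ^ (n-3) * (Real.exp (-(t-n)*Real.log 2) * r ^ (-((n:ℝ)*(2*θ)))) := by
            exact mul_le_mul_of_nonneg_left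
              (mul_le_mul_of_nonneg_left b2 (Real.exp_pos _).le) (pow_nonneg hr0.le _)
        _ = Real.exp (-(t-n)*Real.log 2) * r ^ δ := by rw [← hpow]; ring
    have step2 : ∫ r in Ioi (1:ℝ), Real.exp (-(t-n)*Real.log 2) * r ^ δ
        = Real.exp (-(t-n)*Real.log 2) * (-1/(δ+1)) := by
      rw [integral_const_mul, integral_Ioi_rpow_of_lt hδ one_pos]
      simp [Real.one_rpow]
    have step3 : Real.exp (-(t-n)*Real.log 2)
        ≤ Real.exp ((n:ℝ)*Real.log 2) * (((m:ℝ)/Real.log 2)^m * t ^ (-β)) := by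
      have e1 : -(t-(n:ℝ))*Real.log 2 = (n:ℝ)*Real.log 2 + (-(t*Real.log 2)) := by ring
      rw [e1, Real.exp_add]
      exact mul_le_mul_of_nonneg_left (exp_neg_mul_log_two_le hβ ht1) (Real.exp_pos _).le
    have hcδ : 0 ≤ -1/(δ+1) :=
      (div_pos_iff.mpr (Or.inr ⟨by norm_num, hδ1⟩)).le
    calc ∫ r in Ioi (1:ℝ), upF n θ t r
        ≤ ∫ r in Ioi (1:ℝ), Real.exp (-(t-n)*Real.log 2) * r ^ δ := step1
      _ = Real.exp (-(t-n)*Real.log 2) * (-1/(δ+1)) := step2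
      _ ≤ (Real.exp ((n:ℝ)*Real.log 2) * (((m:ℝ)/Real.log 2)^m * t ^ (-β))) * (-1/(δ+1)) :=
          mul_le_mul_of_nonneg_right step3 hcδ
      _ = _ := by ring
  -- combine
  have hsplit : ∫ r in Ioi (0:ℝ), upF n θ t r
      = (∫ r in Ioc (0:ℝ) 1, upF n θ t r) + ∫ r in Ioi (1:ℝ), upF n θ t r := by
    rw [← setIntegral_union (Set.Ioc_disjoint_Ioi le_rfl) measurableSet_Ioi
      (hupInt.mono_set Ioc_subset_Ioi_self) (hupInt.mono_set (Ioi_subset_Ioi (by norm_num)))]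
    rw [Set.Ioc_union_Ioi_eq_Ioi (by norm_num : (0:ℝ) ≤ 1)]
  rw [hsplit]
  have := add_le_add piece1 piece2
  calc (∫ r in Ioc (0:ℝ) 1, upF n θ t r) + ∫ r in Ioi (1:ℝ), upF n θ t r
      ≤ (Real.log 2)^(-β) * (1/(2*θ)) * Real.Gamma β * t ^ (-β)
        + Real.exp ((n:ℝ)*Real.log 2) * ((m:ℝ)/Real.log 2)^m * (-1/(δ+1)) * t ^ (-β) := this
    _ = _ := by ring

end Upper

section Lower

variable {n : ℕ} {θ : ℝ}

lemma radF_integral_ge (hn : 3 ≤ n) (hθ : 1/2 ≤ θ) :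
    ∃ c > (0:ℝ), ∀ t, (n:ℝ) ≤ t →
      c * t ^ (-(((n:ℝ)-2)/(2*θ))) ≤ ∫ r in Ioi (0:ℝ), radF n θ t r := by
  have hα : 1 ≤ 2*θ := by linarith
  have hα0 : (0:ℝ) < 2*θ := by linarith
  have hn3 : (3:ℝ) ≤ (n:ℝ) := by exact_mod_cast hn
  refine ⟨Real.exp (-(5:ℝ)^(2*θ)), Real.exp_pos _, ?_⟩
  intro t ht
  have ht0 : 0 < t := by linarith
  have ht1 : 1 ≤ t := by linarith
  set ε : ℝ := t ^ (-(2*θ)⁻¹) with hεdef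
  have hε0 : 0 < ε := Real.rpow_pos_of_pos ht0 _
  have hεt : 1/t ≤ ε := by
    rw [one_div, ← Real.rpow_neg_one t]
    apply Real.rpow_le_rpow_of_exponent_le ht1
    rw [neg_le_neg_iff]
    exact inv_le_one_of_one_le₀ hα
  have hεα : ε ^ (2*θ) = 1/t := by
    rw [hεdef, ← Real.rpow_mul ht0.le]
    rw [neg_mul, inv_mul_cancel₀ hα0.ne', Real.rpow_neg_one t, one_div]
  have hradInt := radF_integrableOn hn hθ ht
  set C : ℝ := Real.exp (-(5:ℝ)^(2*θ)) * ε^(n-3) with hCdef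
  have hC0 : 0 < C := by rw [hCdef]; positivity
  -- sin² integral lower bound
  have hsin : ε ≤ ∫ r in Ioc ε (5*ε), Real.sin (r*t)^2 := by
    rw [← intervalIntegral.integral_of_le (by linarith : ε ≤ 5*ε)]
    rw [intervalIntegral.integral_comp_mul_right (fun x => Real.sin x ^ 2) ht0.ne']
    rw [integral_sin_sq, smul_eq_mul]
    have hA1 : -1 ≤ Real.sin (ε*t) * Real.cos (ε*t) := by
      nlinarith [Real.neg_one_le_sin (ε*t), Real.sin_le_one (ε*t),
        Real.neg_one_le_cos (ε*t), Real.cos_le_one (ε*t)]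
    have hB1 : Real.sin (5*ε*t) * Real.cos (5*ε*t) ≤ 1 := by
      nlinarith [Real.neg_one_le_sin (5*ε*t), Real.sin_le_one (5*ε*t),
        Real.neg_one_le_cos (5*ε*t), Real.cos_le_one (5*ε*t)]
    have hεt1 : 1 ≤ ε * t := (div_le_iff₀ ht0).1 hεt
    rw [le_inv_mul_iff₀ ht0, le_div_iff₀ two_pos]
    nlinarith [hA1, hB1, hεt1]
  have hsub : Ioc ε (5*ε) ⊆ Ioi (0:ℝ) := fun x hx => lt_trans hε0 hx.1
  -- pointwise lower bound on the annulus
  have h2 : ∫ r in Ioc ε (5*ε), C * Real.sin (r*t)^2 ≤ ∫ r in Ioc ε (5*ε), radF n θ t r := by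
    apply setIntegral_mono_on _ (hradInt.mono_set hsub) measurableSet_Ioc
    · intro r hr
      have hr1 : ε < r := hr.1
      have hr2 : r ≤ 5*ε := hr.2
      have hr0 : 0 < r := lt_trans hε0 hr1
      rw [radF_eq n hn θ t r hr0]
      set L : ℝ := Real.log (1 + r ^ (2*θ)) with hLdef
      have p1 : ε^(n-3) ≤ r^(n-3) := pow_le_pow_left₀ hε0.le hr1.le _
      have hrx : r ^ (2*θ) ≤ (5:ℝ)^(2*θ)/t := by
        have b1 : r ^ (2*θ) ≤ (5*ε) ^ (2*θ) := Real.rpow_le_rpow hr0.le hr2 hα0.le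
        have b2 : ((5:ℝ)*ε) ^ (2*θ) = (5:ℝ)^(2*θ) * ε^(2*θ) :=
          Real.mul_rpow (by norm_num) hε0.le
        rw [b2, hεα] at b1
        calc r ^ (2*θ) ≤ (5:ℝ)^(2*θ) * (1/t) := b1
          _ = (5:ℝ)^(2*θ)/t := by ring
      have hLx : L ≤ r ^ (2*θ) := by
        have := Real.log_le_sub_one_of_pos
          (show (0:ℝ) < 1 + r ^ (2*θ) by positivity)
        rw [hLdef]; linarith
      have p2 : Real.exp (-(5:ℝ)^(2*θ)) ≤ Real.exp (-t*L) := by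
        apply Real.exp_le_exp.2
        have : t * L ≤ t * ((5:ℝ)^(2*θ)/t) :=
          mul_le_mul_of_nonneg_left (hLx.trans hrx) ht0.le
        rw [mul_div_cancel₀ _ ht0.ne'] at this
        linarith
      calc C * Real.sin (r*t)^2
          = (Real.exp (-(5:ℝ)^(2*θ)) * ε^(n-3)) * Real.sin (r*t)^2 := by rw [hCdef]
        _ ≤ (Real.exp (-t*L) * r^(n-3)) * Real.sin (r*t)^2 := by
            apply mul_le_mul_of_nonneg_right _ (sq_nonneg _)
            exact mul_le_mul p2 p1 (pow_nonneg hε0.le _) (Real.exp_pos _).le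
        _ = r^(n-3) * (Real.exp (-t*L) * Real.sin (r*t)^2) := by ring
    · exact (continuous_const.mul
        ((Real.continuous_sin.comp (continuous_id.mul continuous_const)).pow 2)).integrableOn_Ioc
  have h1 : ∫ r in Ioc ε (5*ε), radF n θ t r ≤ ∫ r in Ioi (0:ℝ), radF n θ t r := by
    apply setIntegral_mono_set hradInt _ hsub.eventuallyLE
    filter_upwards [ae_restrict_mem measurableSet_Ioi] with r hr
    exact radF_nonneg n θ t r (le_of_lt hr)
  have h3 : ∫ r in Ioc ε (5*ε), C * Real.sin (r*t)^2
      = C * ∫ r in Ioc ε (5*ε), Real.sin (r*t)^2 := integral_const_mul _ _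
  have hεpow : t ^ (-(((n:ℝ)-2)/(2*θ))) = ε^(n-2) := by
    rw [← Real.rpow_natCast ε (n-2), hεdef, ← Real.rpow_mul ht0.le]
    congr 1
    have : ((n-2:ℕ):ℝ) = (n:ℝ) - 2 := by push_cast [Nat.cast_sub (by omega : 2 ≤ n)]; ring
    rw [this, div_eq_mul_inv]
    ring
  have hfinal : Real.exp (-(5:ℝ)^(2*θ)) * t ^ (-(((n:ℝ)-2)/(2*θ))) = C * ε := by
    rw [hεpow, hCdef]
    have : ε^(n-3) * ε = ε^(n-2) := by
      rw [← pow_succ]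
      congr 1
      omega
    rw [mul_assoc, this]
  calc Real.exp (-(5:ℝ)^(2*θ)) * t ^ (-(((n:ℝ)-2)/(2*θ))) = C * ε := hfinal
    _ ≤ C * ∫ r in Ioc ε (5*ε), Real.sin (r*t)^2 := mul_le_mul_of_nonneg_left hsin hC0.le
    _ = ∫ r in Ioc ε (5*ε), C * Real.sin (r*t)^2 := h3.symm
    _ ≤ ∫ r in Ioc ε (5*ε), radF n θ t r := h2
    _ ≤ ∫ r in Ioi (0:ℝ), radF n θ t r := h1

end Lower

/-- Proposition 4.1: for `n > 2` and `θ ≥ 1/2`, the squared `L²` norm of the profile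
satisfies `∫ (1+|ξ|^{2θ})^{-t} sin²(t|ξ|)/|ξ|² dξ ≈ t^{-(n-2)/(2θ)}` for large `t`. -/
theorem stmt_15 (n : ℕ) (hn : 2 < n) (θ : ℝ) (hθ : 1 / 2 ≤ θ) :
    ∃ C > (0 : ℝ), ∃ t₀ > (0 : ℝ), ∀ t ≥ t₀,
      C * t ^ (-((n : ℝ) - 2) / (2 * θ)) ≤
          (∫ ξ : EuclideanSpace ℝ (Fin n),
            Real.exp (-t * Real.log (1 + ‖ξ‖ ^ (2 * θ))) * Real.sin (‖ξ‖ * t) ^ 2 / ‖ξ‖ ^ 2) ∧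
        (∫ ξ : EuclideanSpace ℝ (Fin n),
            Real.exp (-t * Real.log (1 + ‖ξ‖ ^ (2 * θ))) * Real.sin (‖ξ‖ * t) ^ 2 / ‖ξ‖ ^ 2) ≤
          C⁻¹ * t ^ (-((n : ℝ) - 2) / (2 * θ)) := by
  have hn3 : 3 ≤ n := hn
  haveI : Nontrivial (EuclideanSpace ℝ (Fin n)) := by
    apply Module.nontrivial_of_finrank_pos (R := ℝ)
    rw [finrank_euclideanSpace, Fintype.card_fin]; omega
  set v : ℝ := (volume (ball (0:EuclideanSpace ℝ (Fin n)) 1)).toReal with hvdef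
  have hv : 0 < v := ENNReal.toReal_pos (measure_ball_pos volume 0 one_pos).ne'
    measure_ball_lt_top.ne
  set K : ℝ := (n:ℝ) * v with hKdef
  have hK : 0 < K := mul_pos (by exact_mod_cast (by omega : 0 < n)) hv
  obtain ⟨c₂, hc₂, hup⟩ := upF_integral_le hn3 hθ
  obtain ⟨c₁, hc₁, hlow⟩ := radF_integral_ge hn3 hθ
  refine ⟨min (K*c₁) ((K*c₂)⁻¹), by positivity, (n:ℝ),
    by exact_mod_cast (by omega : 0 < n), ?_⟩
  intro t ht
  have ht0 : 0 < t := lt_of_lt_of_le (by exact_mod_cast (by omega : 0 < n)) ht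
  have key := integral_fun_norm_addHaar
    (volume : Measure (EuclideanSpace ℝ (Fin n)))
    (fun r => Real.exp (-t * Real.log (1 + r ^ (2*θ))) * Real.sin (r*t)^2 / r^2)
  rw [finrank_euclideanSpace] at key
  simp only [Fintype.card_fin, nsmul_eq_mul, smul_eq_mul] at key
  have hJ : (∫ y in Ioi (0:ℝ),
      y^(n-1) * (Real.exp (-t*Real.log (1+y^(2*θ))) * Real.sin (y*t)^2 / y^2))
      = ∫ r in Ioi (0:ℝ), radF n θ t r := rfl
  have hexp : -((n:ℝ) - 2) / (2 * θ) = -(((n:ℝ)-2)/(2*θ)) := neg_div _ _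
  have hT : (0:ℝ) < t ^ (-(((n:ℝ)-2)/(2*θ))) := Real.rpow_pos_of_pos ht0 _
  have hcomp : ∫ r in Ioi (0:ℝ), radF n θ t r ≤ ∫ r in Ioi (0:ℝ), upF n θ t r :=
    setIntegral_mono_on (radF_integrableOn hn3 hθ ht) (upF_integrableOn hn3 hθ ht)
      measurableSet_Ioi (fun r hr => radF_le_upF n hn3 θ t r hr)
  rw [key, hJ, hexp]
  constructor
  · calc min (K*c₁) ((K*c₂)⁻¹) * t ^ (-(((n:ℝ)-2)/(2*θ)))
        ≤ (K*c₁) * t ^ (-(((n:ℝ)-2)/(2*θ))) :=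
          mul_le_mul_of_nonneg_right (min_le_left _ _) hT.le
      _ = K * (c₁ * t ^ (-(((n:ℝ)-2)/(2*θ)))) := by ring
      _ ≤ K * ∫ r in Ioi (0:ℝ), radF n θ t r :=
          mul_le_mul_of_nonneg_left (hlow t ht) hK.le
      _ = (n:ℝ) * (v * ∫ r in Ioi (0:ℝ), radF n θ t r) := by rw [hKdef]; ring
  · have hKc₂ : K * c₂ ≤ (min (K*c₁) ((K*c₂)⁻¹))⁻¹ := by
      have h := inv_anti₀ (show (0:ℝ) < min (K*c₁) ((K*c₂)⁻¹) by positivity)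
        (min_le_right (K*c₁) ((K*c₂)⁻¹))
      rwa [inv_inv] at h
    calc (n:ℝ) * (v * ∫ r in Ioi (0:ℝ), radF n θ t r)
        = K * ∫ r in Ioi (0:ℝ), radF n θ t r := by rw [hKdef]; ring
      _ ≤ K * ∫ r in Ioi (0:ℝ), upF n θ t r := mul_le_mul_of_nonneg_left hcomp hK.le
      _ ≤ K * (c₂ * t ^ (-(((n:ℝ)-2)/(2*θ)))) :=
          mul_le_mul_of_nonneg_left (hup t ht) hK.le
      _ = (K * c₂) * t ^ (-(((n:ℝ)-2)/(2*θ))) := by ring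
      _ ≤ (min (K*c₁) ((K*c₂)⁻¹))⁻¹ * t ^ (-(((n:ℝ)-2)/(2*θ))) :=
          mul_le_mul_of_nonneg_right hKc₂ hT.le
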